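/- Let F be a shifted family of k-element subsets of {1,...,n} with matching number at most s. Then at least one of the following holds: (i) every member of F intersects {1,...,s}; (ii) the clique number of F satisfies s+k ≤ ω(F) < sk+k-1; or (iii) F equals the family of all k-subsets of {1,...,sk+k-1}. -/

import Mathlib

open Finset

/-- Coordinatewise (shifting) partial order on finite sets of naturals:
`A ≼ B` iff the increasing enumerations satisfy `aₗ ≤ bₗ` for all `l`. -/
def shiftLE (A B : Finset ℕ) : Prop :=
  List.Forall₂ (· ≤ ·) (A.sort (· ≤ ·)) (B.sort (· ≤ ·))

/-- A family on the ground set `{1,…,n}` is shifted. -/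
def IsShifted (n : ℕ) (F : Finset (Finset ℕ)) : Prop :=
  ∀ B ∈ F, ∀ A ⊆ Finset.Icc 1 n, shiftLE A B → A ∈ F

/-- The matching number of `F` is at most `s`. -/
def MatchingLE (F : Finset (Finset ℕ)) (s : ℕ) : Prop :=
  ∀ M ⊆ F, (M : Set (Finset ℕ)).PairwiseDisjoint id → M.card ≤ s

/-- `F` contains `s` pairwise disjoint members. -/
def HasMatching (F : Finset (Finset ℕ)) (s : ℕ) : Prop :=
  ∃ M ⊆ F, (M : Set (Finset ℕ)).PairwiseDisjoint id ∧ M.card = s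

/-- The clique number of `F` (as a `k`-graph on `{1,…,n}`) is at least `q`. -/
def HasClique (n : ℕ) (F : Finset (Finset ℕ)) (k q : ℕ) : Prop :=
  ∃ Q ⊆ Finset.Icc 1 n, Q.card = q ∧ Q.powersetCard k ⊆ F

lemma get_add_le {l : List ℕ} (h : l.Pairwise (· < ·)) :
    ∀ (d i : ℕ) (hd : i + d < l.length),
      l.get ⟨i, by omega⟩ + d ≤ l.get ⟨i + d, hd⟩
  | 0, i, hd => le_refl _
  | d+1, i, hd => by
    have h1 := get_add_le h d i (by omega)
    have h2 : l.get ⟨i+d, by omega⟩ < l.get ⟨i+d+1, by omega⟩ :=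
      h.rel_get_of_lt (by simp [Fin.lt_def])
    have h3 : l.get ⟨i + (d+1), hd⟩ = l.get ⟨i+d+1, by omega⟩ := rfl
    omega

lemma get_le_get {l : List ℕ} (h : l.Pairwise (· < ·)) (i j : ℕ) (hij : i ≤ j)
    (hj : j < l.length) : l.get ⟨i, by omega⟩ + (j - i) ≤ l.get ⟨j, hj⟩ := by
  obtain ⟨d, rfl⟩ := Nat.exists_eq_add_of_le hij
  have := get_add_le h d i hj
  simpa [Nat.add_sub_cancel_left] using this

lemma sort_get_lower {A : Finset ℕ} {a : ℕ} (h : ∀ x ∈ A, a ≤ x) (i : ℕ)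
    (hi : i < (A.sort (· ≤ ·)).length) : a + i ≤ (A.sort (· ≤ ·)).get ⟨i, hi⟩ := by
  have h1 := get_le_get (A.sortedLT_sort.pairwise) 0 i (by omega) hi
  have hm : (A.sort (· ≤ ·)).get ⟨0, by omega⟩ ∈ A :=
    (Finset.mem_sort _).mp (List.get_mem _ _)
  have := h _ hm
  omega

lemma sort_get_upper {A : Finset ℕ} {b : ℕ} (h : ∀ x ∈ A, x ≤ b) (i : ℕ)
    (hi : i < (A.sort (· ≤ ·)).length) :
    (A.sort (· ≤ ·)).get ⟨i, hi⟩ + ((A.sort (· ≤ ·)).length - 1 - i) ≤ b := by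
  have h1 := get_le_get (A.sortedLT_sort.pairwise) i ((A.sort (· ≤ ·)).length - 1) (by omega)
    (by omega)
  have hm : (A.sort (· ≤ ·)).get ⟨(A.sort (· ≤ ·)).length - 1, by omega⟩ ∈ A :=
    (Finset.mem_sort _).mp (List.get_mem _ _)
  have := h _ hm
  omega

lemma clique_shift {n k m : ℕ} {F : Finset (Finset ℕ)} (hshift : IsShifted n F)
    {Q : Finset ℕ} (hQn : Q ⊆ Finset.Icc 1 n) (hQc : Q.card = m)
    (hcl : Q.powersetCard k ⊆ F) {B : Finset ℕ} (hB : B ⊆ Finset.Icc 1 m)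
    (hBc : B.card = k) : B ∈ F := by
  classical
  have hlqlen : (Q.sort (· ≤ ·)).length = m := by rw [Finset.length_sort, hQc]
  have hlblen : (B.sort (· ≤ ·)).length = k := by rw [Finset.length_sort, hBc]
  have hmn : m ≤ n := by
    have := Finset.card_le_card hQn
    rwa [hQc, Nat.card_Icc, Nat.add_sub_cancel] at this
  set f : ℕ → ℕ := fun j => (Q.sort (· ≤ ·)).getD (j-1) 0 with hf
  have hBmem : ∀ j ∈ B, 1 ≤ j ∧ j ≤ m := by
    intro j hj; exact Finset.mem_Icc.mp (hB hj)
  have hfget : ∀ j (hj1 : 1 ≤ j) (hj2 : j ≤ m),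
      f j = (Q.sort (· ≤ ·)).get ⟨j-1, by omega⟩ := by
    intro j hj1 hj2
    have hlt : j - 1 < (Q.sort (· ≤ ·)).length := by omega
    simp [hf, List.getD_eq_getElem?_getD, List.getElem?_eq_getElem hlt,
      List.get_eq_getElem]
  have hQ1 : ∀ x ∈ Q, 1 ≤ x := fun x hx => (Finset.mem_Icc.mp (hQn hx)).1
  have hfge : ∀ j ∈ B, j ≤ f j := by
    intro j hj
    obtain ⟨hj1, hj2⟩ := hBmem j hj
    rw [hfget j hj1 hj2]
    have := sort_get_lower hQ1 (j-1) (by omega)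
    omega
  have hfmono : ∀ j ∈ B, ∀ j' ∈ B, j < j' → f j < f j' := by
    intro j hj j' hj' hlt
    obtain ⟨hj1, hj2⟩ := hBmem j hj
    obtain ⟨hj1', hj2'⟩ := hBmem j' hj'
    rw [hfget j hj1 hj2, hfget j' hj1' hj2']
    exact (Q.sortedLT_sort.pairwise).rel_get_of_lt (by simp [Fin.lt_def]; omega)
  have hfQ : ∀ j ∈ B, f j ∈ Q := by
    intro j hj
    obtain ⟨hj1, hj2⟩ := hBmem j hj
    rw [hfget j hj1 hj2]
    exact (Finset.mem_sort _).mp (List.get_mem _ _)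
  have hlbmem : ∀ x ∈ B.sort (· ≤ ·), x ∈ B := fun x hx => (Finset.mem_sort _).mp hx
  have hlb'sorted : ((B.sort (· ≤ ·)).map f).Pairwise (· < ·) := by
    rw [List.pairwise_map]
    exact (B.sortedLT_sort.pairwise).imp_of_mem
      (fun ha hb hab => hfmono _ (hlbmem _ ha) _ (hlbmem _ hb) hab)
  have hlb'nodup : ((B.sort (· ≤ ·)).map f).Nodup := hlb'sorted.nodup
  have hB'card : ((B.sort (· ≤ ·)).map f).toFinset.card = k := by
    rw [List.toFinset_card_of_nodup hlb'nodup, List.length_map, hlblen]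
  have hB'Q : ((B.sort (· ≤ ·)).map f).toFinset ⊆ Q := by
    intro x hx
    rw [List.mem_toFinset, List.mem_map] at hx
    obtain ⟨j, hj, rfl⟩ := hx
    exact hfQ j (hlbmem j hj)
  have hB'F : ((B.sort (· ≤ ·)).map f).toFinset ∈ F :=
    hcl (Finset.mem_powersetCard.mpr ⟨hB'Q, hB'card⟩)
  have hB'sort : ((B.sort (· ≤ ·)).map f).toFinset.sort (· ≤ ·) = (B.sort (· ≤ ·)).map f :=
    (List.toFinset_sort (· ≤ ·) hlb'nodup).mpr (hlb'sorted.imp fun hab => le_of_lt hab)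
  have hBn : B ⊆ Finset.Icc 1 n :=
    hB.trans (Finset.Icc_subset_Icc_right hmn)
  refine hshift _ hB'F B hBn ?_
  rw [shiftLE, hB'sort, List.forall₂_iff_get]
  constructor
  · rw [List.length_map]
  · intro i h1 h2
    simp only [List.get_eq_getElem, List.getElem_map]
    exact hfge _ (hlbmem _ (List.getElem_mem _))

lemma exists_partition (k : ℕ) (hk : 1 ≤ k) :
    ∀ (s : ℕ) (D : Finset ℕ), s * k ≤ D.card →
    ∃ M : Finset (Finset ℕ), M.card = s ∧ (∀ T ∈ M, T ⊆ D ∧ T.card = k) ∧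
      (M : Set (Finset ℕ)).PairwiseDisjoint id
  | 0, D, _ => ⟨∅, by simp, by simp, by simp⟩
  | s+1, D, h => by
    have h' : s * k + k ≤ D.card := by
      have : (s+1) * k = s * k + k := by ring
      omega
    obtain ⟨T, hTD, hTcard⟩ := Finset.exists_subset_card_eq (le_trans (Nat.le_add_left k _) h')
    have hrec : s * k ≤ (D \ T).card := by
      rw [Finset.card_sdiff_of_subset hTD, hTcard]; omega
    obtain ⟨M, hMc, hMsub, hMdisj⟩ := exists_partition k hk s (D \ T) hrec
    have hTdisj : ∀ T' ∈ M, Disjoint T T' := by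
      intro T' hT'
      exact Finset.disjoint_right.mpr fun a ha =>
        (Finset.mem_sdiff.mp ((hMsub T' hT').1 ha)).2
    have hTM : T ∉ M := by
      intro hmem
      obtain ⟨t, ht⟩ := Finset.card_pos.mp (by omega : 0 < T.card)
      exact (Finset.disjoint_left.mp (hTdisj T hmem) ht) ht
    refine ⟨insert T M, ?_, ?_, ?_⟩
    · rw [Finset.card_insert_of_notMem hTM, hMc]
    · intro T' hT'
      rcases Finset.mem_insert.mp hT' with rfl | hT'
      · exact ⟨hTD, hTcard⟩
      · exact ⟨(hMsub T' hT').1.trans (Finset.sdiff_subset), (hMsub T' hT').2⟩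
    · rw [Finset.coe_insert]
      exact hMdisj.insert fun T' hT' _ => hTdisj T' hT'

theorem stmt_0 (n k s : ℕ) (F : Finset (Finset ℕ))
    (hF : F ⊆ (Finset.Icc 1 n).powersetCard k)
    (hshift : IsShifted n F) (hmatch : MatchingLE F s) :
    (∀ A ∈ F, (A ∩ Finset.Icc 1 s).Nonempty) ∨
    (HasClique n F k (s + k) ∧ ¬ HasClique n F k (s * k + k - 1)) ∨
    F = (Finset.Icc 1 (s * k + k - 1)).powersetCard k := by
  classical
  rcases F.eq_empty_or_nonempty with rfl | ⟨A₀, hA₀⟩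
  · left; intro A hA; exact absurd hA (Finset.notMem_empty _)
  rcases Nat.eq_zero_or_pos k with rfl | hk
  · -- k = 0 : F = {∅}
    right; right
    have h1 : F ⊆ {∅} := by
      intro A hA
      have := Finset.mem_powersetCard.mp (hF hA)
      simp [Finset.card_eq_zero.mp this.2]
    have h2 : F = {∅} := (Finset.Nonempty.subset_singleton_iff ⟨A₀, hA₀⟩).mp h1
    simp [h2, Finset.powersetCard_zero]
  by_cases h1 : ∀ A ∈ F, (A ∩ Finset.Icc 1 s).Nonempty
  · left; exact h1
  push_neg at h1
  obtain ⟨A, hAF, hAs⟩ := h1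
  obtain ⟨hAn, hAcard⟩ := Finset.mem_powersetCard.mp (hF hAF)
  have hAge : ∀ x ∈ A, s + 1 ≤ x := by
    intro x hx
    have h1n := (Finset.mem_Icc.mp (hAn hx)).1
    by_contra hcon
    have : x ∈ A ∩ Finset.Icc 1 s :=
      Finset.mem_inter.mpr ⟨hx, Finset.mem_Icc.mpr ⟨h1n, by omega⟩⟩
    simp [hAs] at this
  have hAle : ∀ x ∈ A, x ≤ n := fun x hx => (Finset.mem_Icc.mp (hAn hx)).2
  have hAlen : (A.sort (· ≤ ·)).length = k := by rw [Finset.length_sort, hAcard]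
  -- n ≥ s + k
  have hns : s + k ≤ n := by
    have hlt : k - 1 < (A.sort (· ≤ ·)).length := by omega
    have hlow := sort_get_lower hAge (k-1) hlt
    have hup := sort_get_upper hAle (k-1) hlt
    omega
  -- clique of size s + k
  have hclique1 : HasClique n F k (s + k) := by
    refine ⟨Finset.Icc 1 (s+k), Finset.Icc_subset_Icc_right hns, ?_, ?_⟩
    · rw [Nat.card_Icc]; omega
    · intro B hB
      obtain ⟨hBsub, hBcard⟩ := Finset.mem_powersetCard.mp hB
      have hBn : B ⊆ Finset.Icc 1 n := hBsub.trans (Finset.Icc_subset_Icc_right hns)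
      refine hshift A hAF B hBn ?_
      have hBlen : (B.sort (· ≤ ·)).length = k := by rw [Finset.length_sort, hBcard]
      rw [shiftLE, List.forall₂_iff_get]
      refine ⟨by omega, ?_⟩
      intro i hi1 hi2
      have hBle : ∀ x ∈ B, x ≤ s + k := fun x hx => (Finset.mem_Icc.mp (hBsub hx)).2
      have hup := sort_get_upper hBle i hi1
      have hlow := sort_get_lower hAge i hi2
      omega
  by_cases h2 : HasClique n F k (s * k + k - 1)
  · -- F is the complete k-graph on [s*k + k - 1]
    right; right
    obtain ⟨Q, hQn, hQc, hQcl⟩ := h2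
    set m := s * k + k - 1 with hm
    have hallm : ∀ B, B ⊆ Finset.Icc 1 m → B.card = k → B ∈ F :=
      fun B hB hBc => clique_shift hshift hQn hQc hQcl hB hBc
    have hsub : ∀ C ∈ F, C ⊆ Finset.Icc 1 m := by
      intro C hCF
      by_contra hcon
      obtain ⟨c, hcC, hcm⟩ := Finset.not_subset.mp hcon
      obtain ⟨hCn, hCcard⟩ := Finset.mem_powersetCard.mp (hF hCF)
      have hc1 : 1 ≤ c := (Finset.mem_Icc.mp (hCn hcC)).1
      have hcgt : m < c := by
        rcases Nat.lt_or_ge m c with h | h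
        · exact h
        · exact absurd (Finset.mem_Icc.mpr ⟨hc1, h⟩) hcm
      -- |Icc 1 m ∩ C| ≤ k - 1
      have hint : (Finset.Icc 1 m ∩ C) ⊆ C.erase c := by
        intro x hx
        obtain ⟨hx1, hx2⟩ := Finset.mem_inter.mp hx
        exact Finset.mem_erase.mpr
          ⟨by have := (Finset.mem_Icc.mp hx1).2; omega, hx2⟩
      have hintcard : (Finset.Icc 1 m ∩ C).card ≤ k - 1 := by
        have := Finset.card_le_card hint
        rwa [Finset.card_erase_of_mem hcC, hCcard] at this
      have hDcard : s * k ≤ (Finset.Icc 1 m \ C).card := by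
        have h3 := Finset.card_sdiff_add_card_inter (Finset.Icc 1 m) C
        have h4 : (Finset.Icc 1 m).card = m := by rw [Nat.card_Icc]; omega
        have h5 : s * k + k - 1 = m := hm.symm
        have h6 : 1 ≤ k := hk
        omega
      obtain ⟨M, hMc, hMsub, hMdisj⟩ := exists_partition k hk s _ hDcard
      have hMF : ∀ T ∈ M, T ∈ F := by
        intro T hT
        exact hallm T ((hMsub T hT).1.trans Finset.sdiff_subset) (hMsub T hT).2
      have hCM : C ∉ M := by
        intro hmem
        have := (hMsub C hmem).1 hcC
        exact hcm (Finset.mem_sdiff.mp this).1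
      have hCdisj : ∀ T ∈ M, Disjoint C T := by
        intro T hT
        exact Finset.disjoint_right.mpr fun a ha =>
          (Finset.mem_sdiff.mp ((hMsub T hT).1 ha)).2
      have hsubF : insert C M ⊆ F := by
        intro T hT
        rcases Finset.mem_insert.mp hT with rfl | hT
        · exact hCF
        · exact hMF T hT
      have hdisj : ((insert C M : Finset (Finset ℕ)) : Set (Finset ℕ)).PairwiseDisjoint id := by
        rw [Finset.coe_insert]
        exact hMdisj.insert fun T hT _ => hCdisj T hT
      have := hmatch _ hsubF hdisj
      rw [Finset.card_insert_of_notMem hCM, hMc] at this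
      omega
    ext C
    constructor
    · intro hC
      exact Finset.mem_powersetCard.mpr
        ⟨hsub C hC, (Finset.mem_powersetCard.mp (hF hC)).2⟩
    · intro hC
      obtain ⟨hCsub, hCcard⟩ := Finset.mem_powersetCard.mp hC
      exact hallm C hCsub hCcard
  · right; left
    exact ⟨hclique1, h2⟩
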